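/- Let λ₁λ₂ > 0, Q(u) = (λ₁u₁² + λ₂u₂²)/2, X(u) = (u₁,u₂,Q(u)), and let U₀ ⊂ ℝ² be a compact set. For a unit vector v ∈ ℝ³ define h_v(u) := n_Q(u)·v, where n_Q(u) = (−λ₁u₁, −λ₂u₂, 1)/√(1 + λ₁²u₁² + λ₂²u₂²). Then there exists c_Q > 0, depending only on λ₁, λ₂, and U₀, such that for every unit vector v ∈ ℝ³ and every u ∈ U₀ with h_v(u) = 0, the gradient satisfies |∇_u h_v(u)| ≥ c_Q. -/

import Mathlib

noncomputable section
open MeasureTheory Metric Set Function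
open scoped ENNReal RealInnerProductSpace

abbrev E3 : Type := EuclideanSpace ℝ (Fin 3)
abbrev E2 : Type := EuclideanSpace ℝ (Fin 2)

def mk3 (a b c : ℝ) : E3 := (WithLp.equiv 2 (Fin 3 → ℝ)).symm ![a, b, c]

/-- Unit normal of the quadratic graph at `X(u)`. -/
def nQ (l₁ l₂ : ℝ) (u : E2) : E3 :=
  (Real.sqrt (1 + l₁ ^ 2 * (u 0) ^ 2 + l₂ ^ 2 * (u 1) ^ 2))⁻¹ •
    mk3 (-(l₁ * u 0)) (-(l₂ * u 1)) 1

/-- The tangency function `h_v(u) = n_Q(u)·v`. -/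
def hFun (l₁ l₂ : ℝ) (v : E3) (u : E2) : ℝ := ⟪nQ l₁ l₂ u, v⟫

open InnerProductSpace in
lemma hFun_formula (l₁ l₂ : ℝ) (v : E3) (u : E2) :
    hFun l₁ l₂ v u = (-(l₁ * u 0) * v 0 + -(l₂ * u 1) * v 1 + v 2) *
      (Real.sqrt (1 + l₁ ^ 2 * (u 0) ^ 2 + l₂ ^ 2 * (u 1) ^ 2))⁻¹ := by
  simp [hFun, nQ, mk3, real_inner_smul_left, PiLp.inner_apply, Fin.sum_univ_three,
    WithLp.equiv_symm_apply, PiLp.toLp_apply]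
  ring

def mk2 (a b : ℝ) : E2 := (WithLp.equiv 2 (Fin 2 → ℝ)).symm ![a, b]

lemma norm_mk2 (a b : ℝ) : ‖mk2 a b‖ = Real.sqrt (a ^ 2 + b ^ 2) := by
  rw [EuclideanSpace.norm_eq]
  simp [mk2, Fin.sum_univ_two, WithLp.equiv_symm_apply, PiLp.toLp_apply, Real.norm_eq_abs, sq_abs]

lemma norm_sq_E2 (u : E2) : ‖u‖ ^ 2 = (u 0) ^ 2 + (u 1) ^ 2 := by
  have : ‖u‖ = Real.sqrt ((u 0) ^ 2 + (u 1) ^ 2) := by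
    rw [EuclideanSpace.norm_eq]
    simp [Fin.sum_univ_two, Real.norm_eq_abs, sq_abs]
  rw [this, Real.sq_sqrt (by positivity)]

lemma norm_sq_E3 (v : E3) : ‖v‖ ^ 2 = (v 0) ^ 2 + (v 1) ^ 2 + (v 2) ^ 2 := by
  have : ‖v‖ = Real.sqrt ((v 0) ^ 2 + (v 1) ^ 2 + (v 2) ^ 2) := by
    rw [EuclideanSpace.norm_eq]
    simp [Fin.sum_univ_three, Real.norm_eq_abs, sq_abs]
  rw [this, Real.sq_sqrt (by positivity)]

open InnerProductSpace in
lemma hasGradientAt_hFun (l₁ l₂ : ℝ) (v : E3) (u : E2)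
    (h0 : -(l₁ * u 0) * v 0 + -(l₂ * u 1) * v 1 + v 2 = 0) :
    HasGradientAt (hFun l₁ l₂ v)
      (mk2 ((Real.sqrt (1 + l₁ ^ 2 * (u 0) ^ 2 + l₂ ^ 2 * (u 1) ^ 2))⁻¹ * -(l₁ * v 0))
           ((Real.sqrt (1 + l₁ ^ 2 * (u 0) ^ 2 + l₂ ^ 2 * (u 1) ^ 2))⁻¹ * -(l₂ * v 1))) u := by
  have hP0 : HasFDerivAt (fun w : E2 => w 0) (EuclideanSpace.proj (𝕜 := ℝ) (0 : Fin 2)) u :=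
    (EuclideanSpace.proj (𝕜 := ℝ) (0 : Fin 2)).hasFDerivAt
  have hP1 : HasFDerivAt (fun w : E2 => w 1) (EuclideanSpace.proj (𝕜 := ℝ) (1 : Fin 2)) u :=
    (EuclideanSpace.proj (𝕜 := ℝ) (1 : Fin 2)).hasFDerivAt
  have hS := (((hP0.mul hP0).const_mul (l₁ ^ 2)).const_add 1).add ((hP1.mul hP1).const_mul (l₂ ^ 2))
  have hSeq : (fun w : E2 => 1 + l₁ ^ 2 * (w 0 * w 0) + l₂ ^ 2 * (w 1 * w 1)) =
      (fun w : E2 => 1 + l₁ ^ 2 * (w 0) ^ 2 + l₂ ^ 2 * (w 1) ^ 2) := by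
    funext w; ring
  replace hS : HasFDerivAt (fun w : E2 => 1 + l₁ ^ 2 * (w 0 * w 0) + l₂ ^ 2 * (w 1 * w 1)) _ u := hS
  rw [hSeq] at hS
  have hs_pos : 0 < 1 + l₁ ^ 2 * (u 0) ^ 2 + l₂ ^ 2 * (u 1) ^ 2 := by positivity
  have hg_pos : 0 < Real.sqrt (1 + l₁ ^ 2 * (u 0) ^ 2 + l₂ ^ 2 * (u 1) ^ 2) :=
    Real.sqrt_pos.mpr hs_pos
  have hinv := ((Real.hasDerivAt_sqrt hs_pos.ne').inv hg_pos.ne').comp_hasFDerivAt u hS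
  have hN := (((hP0.const_mul l₁).neg.mul_const (v 0)).add
    ((hP1.const_mul l₂).neg.mul_const (v 1))).add_const (v 2)
  have hT := hN.mul hinv
  have hEq : (fun w : E2 => (-(l₁ * w 0) * v 0 + -(l₂ * w 1) * v 1 + v 2) *
      (Real.sqrt (1 + l₁ ^ 2 * (w 0) ^ 2 + l₂ ^ 2 * (w 1) ^ 2))⁻¹) = hFun l₁ l₂ v :=
    funext fun w => (hFun_formula l₁ l₂ v w).symm
  simp only [Function.comp_def] at hT
  simp only [Pi.add_def, Pi.mul_def, Pi.neg_def, Pi.inv_def] at hT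
  rw [h0, hEq] at hT
  simp only [zero_smul, zero_add] at hT
  have hT' : HasFDerivAt (hFun l₁ l₂ v)
      (toDual ℝ E2 (mk2 ((Real.sqrt (1 + l₁ ^ 2 * (u 0) ^ 2 + l₂ ^ 2 * (u 1) ^ 2))⁻¹ * -(l₁ * v 0))
        ((Real.sqrt (1 + l₁ ^ 2 * (u 0) ^ 2 + l₂ ^ 2 * (u 1) ^ 2))⁻¹ * -(l₂ * v 1)))) u := by
    refine hT.congr_fderiv ?_
    ext w
    simp [mk2, toDual_apply_apply, PiLp.inner_apply, Fin.sum_univ_two, WithLp.equiv_symm_apply, PiLp.toLp_apply,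
      ContinuousLinearMap.smul_apply]
    ring
  exact hasGradientAt_iff_hasFDerivAt.mpr hT'

/-- uniform transversality of the tangency function on a compact chart. -/
theorem tangency_gradient_lower_bound (l₁ l₂ : ℝ) (hl : 0 < l₁ * l₂)
    (U₀ : Set E2) (hU₀ : IsCompact U₀) :
    ∃ cQ : ℝ, 0 < cQ ∧
      ∀ v : E3, ‖v‖ = 1 → ∀ u ∈ U₀, hFun l₁ l₂ v u = 0 →
        cQ ≤ ‖gradient (hFun l₁ l₂ v) u‖ := by
  obtain ⟨R, hR⟩ := hU₀.isBounded.exists_norm_le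
  have hl1 : l₁ ≠ 0 := by rintro rfl; simp at hl
  have hl2 : l₂ ≠ 0 := by rintro rfl; simp at hl
  set Rm : ℝ := max R 0 with hRm
  set M : ℝ := (l₁ ^ 2 + l₂ ^ 2) * Rm ^ 2 with hM
  have hM0 : 0 ≤ M := by positivity
  have hm_pos : 0 < min (l₁ ^ 2) (l₂ ^ 2) :=
    lt_min (by positivity) (by positivity)
  refine ⟨Real.sqrt (min (l₁ ^ 2) (l₂ ^ 2) / (1 + M) ^ 2),
    Real.sqrt_pos.mpr (by positivity), ?_⟩
  intro v hv u hu h0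
  have hs_pos : 0 < 1 + l₁ ^ 2 * (u 0) ^ 2 + l₂ ^ 2 * (u 1) ^ 2 := by positivity
  have hg_pos : 0 < Real.sqrt (1 + l₁ ^ 2 * (u 0) ^ 2 + l₂ ^ 2 * (u 1) ^ 2) :=
    Real.sqrt_pos.mpr hs_pos
  have hN0 : -(l₁ * u 0) * v 0 + -(l₂ * u 1) * v 1 + v 2 = 0 := by
    rw [hFun_formula] at h0
    rcases mul_eq_zero.mp h0 with h | h
    · exact h
    · exact absurd h (inv_ne_zero hg_pos.ne')
  have hgrad := (hasGradientAt_hFun l₁ l₂ v u hN0).gradient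
  rw [hgrad, norm_mk2]
  refine Real.sqrt_le_sqrt ?_
  -- now pure algebra
  have hunit : (v 0) ^ 2 + (v 1) ^ 2 + (v 2) ^ 2 = 1 := by
    have := norm_sq_E3 v
    rw [hv] at this
    linarith [this]
  have ha : (u 0) ^ 2 ≤ Rm ^ 2 := by
    have h1 : (u 0) ^ 2 ≤ ‖u‖ ^ 2 := by
      rw [norm_sq_E2]; nlinarith [sq_nonneg (u 1)]
    have h2 : ‖u‖ ≤ Rm := le_trans (hR u hu) (le_max_left _ _)
    have h3 : ‖u‖ ^ 2 ≤ Rm ^ 2 := pow_le_pow_left₀ (norm_nonneg u) h2 2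
    linarith
  have hb : (u 1) ^ 2 ≤ Rm ^ 2 := by
    have h1 : (u 1) ^ 2 ≤ ‖u‖ ^ 2 := by
      rw [norm_sq_E2]; nlinarith [sq_nonneg (u 0)]
    have h2 : ‖u‖ ≤ Rm := le_trans (hR u hu) (le_max_left _ _)
    have h3 : ‖u‖ ^ 2 ≤ Rm ^ 2 := pow_le_pow_left₀ (norm_nonneg u) h2 2
    linarith
  have hsle : 1 + l₁ ^ 2 * (u 0) ^ 2 + l₂ ^ 2 * (u 1) ^ 2 ≤ 1 + M := by
    have e1 := mul_le_mul_of_nonneg_left ha (sq_nonneg l₁)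
    have e2 := mul_le_mul_of_nonneg_left hb (sq_nonneg l₂)
    have e3 : M = l₁ ^ 2 * Rm ^ 2 + l₂ ^ 2 * Rm ^ 2 := by rw [hM]; ring
    linarith
  have hv2 : v 2 = l₁ * u 0 * v 0 + l₂ * u 1 * v 1 := by linarith
  have hCS : (v 2) ^ 2 ≤ (l₁ ^ 2 * (u 0) ^ 2 + l₂ ^ 2 * (u 1) ^ 2) * ((v 0) ^ 2 + (v 1) ^ 2) := by
    rw [hv2]
    nlinarith [sq_nonneg (l₁ * u 0 * v 1 - l₂ * u 1 * v 0)]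
  have hc : 1 ≤ (1 + M) * ((v 0) ^ 2 + (v 1) ^ 2) := by
    have hs'M : l₁ ^ 2 * (u 0) ^ 2 + l₂ ^ 2 * (u 1) ^ 2 ≤ M := by linarith
    have hprod : (l₁ ^ 2 * (u 0) ^ 2 + l₂ ^ 2 * (u 1) ^ 2) * ((v 0) ^ 2 + (v 1) ^ 2) ≤
        M * ((v 0) ^ 2 + (v 1) ^ 2) := mul_le_mul_of_nonneg_right hs'M (by positivity)
    have hexp : (1 + M) * ((v 0) ^ 2 + (v 1) ^ 2) =
        (v 0) ^ 2 + (v 1) ^ 2 + M * ((v 0) ^ 2 + (v 1) ^ 2) := by ring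
    linarith
  -- rewrite the RHS
  have hsq : (Real.sqrt (1 + l₁ ^ 2 * (u 0) ^ 2 + l₂ ^ 2 * (u 1) ^ 2)) ^ 2 =
      1 + l₁ ^ 2 * (u 0) ^ 2 + l₂ ^ 2 * (u 1) ^ 2 := Real.sq_sqrt hs_pos.le
  have hrw : ((Real.sqrt (1 + l₁ ^ 2 * (u 0) ^ 2 + l₂ ^ 2 * (u 1) ^ 2))⁻¹ * -(l₁ * v 0)) ^ 2 +
      ((Real.sqrt (1 + l₁ ^ 2 * (u 0) ^ 2 + l₂ ^ 2 * (u 1) ^ 2))⁻¹ * -(l₂ * v 1)) ^ 2 =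
      (l₁ ^ 2 * (v 0) ^ 2 + l₂ ^ 2 * (v 1) ^ 2) / (1 + l₁ ^ 2 * (u 0) ^ 2 + l₂ ^ 2 * (u 1) ^ 2) := by
    rw [← hsq]
    field_simp
    simp only [hsq]
  rw [hrw, div_le_div_iff₀ (by positivity) hs_pos]
  have hE : min (l₁ ^ 2) (l₂ ^ 2) * ((v 0) ^ 2 + (v 1) ^ 2) ≤
      l₁ ^ 2 * (v 0) ^ 2 + l₂ ^ 2 * (v 1) ^ 2 := by
    have a1 : min (l₁ ^ 2) (l₂ ^ 2) * (v 0) ^ 2 ≤ l₁ ^ 2 * (v 0) ^ 2 :=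
      mul_le_mul_of_nonneg_right (min_le_left _ _) (sq_nonneg _)
    have a2 : min (l₁ ^ 2) (l₂ ^ 2) * (v 1) ^ 2 ≤ l₂ ^ 2 * (v 1) ^ 2 :=
      mul_le_mul_of_nonneg_right (min_le_right _ _) (sq_nonneg _)
    have a3 : min (l₁ ^ 2) (l₂ ^ 2) * ((v 0) ^ 2 + (v 1) ^ 2) =
        min (l₁ ^ 2) (l₂ ^ 2) * (v 0) ^ 2 + min (l₁ ^ 2) (l₂ ^ 2) * (v 1) ^ 2 := by ring
    linarith
  have e1 : min (l₁ ^ 2) (l₂ ^ 2) * (1 + l₁ ^ 2 * (u 0) ^ 2 + l₂ ^ 2 * (u 1) ^ 2) ≤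
      min (l₁ ^ 2) (l₂ ^ 2) * (1 + M) := mul_le_mul_of_nonneg_left hsle hm_pos.le
  have h1' : min (l₁ ^ 2) (l₂ ^ 2) ≤
      min (l₁ ^ 2) (l₂ ^ 2) * ((1 + M) * ((v 0) ^ 2 + (v 1) ^ 2)) := by
    calc min (l₁ ^ 2) (l₂ ^ 2) = min (l₁ ^ 2) (l₂ ^ 2) * 1 := (mul_one _).symm
      _ ≤ _ := mul_le_mul_of_nonneg_left hc hm_pos.le
  have e2 : min (l₁ ^ 2) (l₂ ^ 2) * (1 + M) ≤
      min (l₁ ^ 2) (l₂ ^ 2) * ((1 + M) * ((v 0) ^ 2 + (v 1) ^ 2)) * (1 + M) :=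
    mul_le_mul_of_nonneg_right h1' (by positivity)
  have e3 : min (l₁ ^ 2) (l₂ ^ 2) * ((1 + M) * ((v 0) ^ 2 + (v 1) ^ 2)) * (1 + M) =
      min (l₁ ^ 2) (l₂ ^ 2) * ((v 0) ^ 2 + (v 1) ^ 2) * (1 + M) ^ 2 := by ring
  have e4 : min (l₁ ^ 2) (l₂ ^ 2) * ((v 0) ^ 2 + (v 1) ^ 2) * (1 + M) ^ 2 ≤
      (l₁ ^ 2 * (v 0) ^ 2 + l₂ ^ 2 * (v 1) ^ 2) * (1 + M) ^ 2 :=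
    mul_le_mul_of_nonneg_right hE (by positivity)
  linarith
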